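/- Suppose the matrix J = (J_{𝔍𝔍'})_{𝔍,𝔍'∈𝒫₊} of coupling constants of the Hamiltonian H (assumed reflection invariant and globally gauge invariant) is positive semidefinite. Then the partition sum Z_{βH} = Tr(e^{−βH}) is a non-decreasing function of β ≥ 0 with Z₀ = 1; in particular 1 ≤ Z_{βH} for all β ≥ 0. -/

import Mathlib

open ComplexOrder

noncomputable section

/-- The setting of the paper: a finite set `Λ` with a fixed-point free involution `ϑ`
exchanging `Λp` and its complement, the Clifford algebra (algebra of Majoranas) `carrier`
with self-adjoint generators `c i`, the global gauge automorphism `gauge`, the antilinear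
reflection `*`-automorphism `Θ`, a square root `ζ` of `-1`, the twisted product `twist`,
a choice `P` of orderings of the subsets of `Λp` (giving the bases
`{C J : J ∈ P}` of `𝔄₊` and `{Θ(C J) ∘ C J' : J, J' ∈ P}` of `𝔄`),
and the tracial state `Tr` picking out the coefficient of `1` in the basis expansion. -/
structure MajoranaSetting where
  Λ : Type
  [fintypeΛ : Fintype Λ]
  [deceqΛ : DecidableEq Λ]
  ϑ : Λ → Λ
  ϑ_invol : Function.Involutive ϑ
  ϑ_fixfree : ∀ i, ϑ i ≠ i
  Λp : Finset Λ
  ϑ_exch : ∀ i, i ∈ Λp ↔ ϑ i ∉ Λp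
  carrier : Type
  [nring : NormedRing carrier]
  [nalg : NormedAlgebra ℂ carrier]
  [cmpl : CompleteSpace carrier]
  [starring : StarRing carrier]
  [starmod : StarModule ℂ carrier]
  c : Λ → carrier
  c_star : ∀ i, star (c i) = c i
  clifford : ∀ i j, c i * c j + c j * c i = if i = j then (2 : carrier) else 0
  gauge : carrier ≃ₐ[ℂ] carrier
  gauge_c : ∀ i, gauge (c i) = - c i
  Θ : carrier → carrier
  Θ_add : ∀ x y, Θ (x + y) = Θ x + Θ y
  Θ_smul : ∀ (z : ℂ) (x), Θ (z • x) = (starRingEnd ℂ z) • Θ x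
  Θ_mul : ∀ x y, Θ (x * y) = Θ x * Θ y
  Θ_star : ∀ x, Θ (star x) = star (Θ x)
  Θ_invol : ∀ x, Θ (Θ x) = x
  Θ_c : ∀ i, Θ (c i) = c (ϑ i)
  ζ : ℂ
  ζ_sq : ζ ^ 2 = -1
  twist : carrier → carrier → carrier
  twist_add_left : ∀ x x' y, twist (x + x') y = twist x y + twist x' y
  twist_add_right : ∀ x y y', twist x (y + y') = twist x y + twist x y'
  twist_smul_left : ∀ (z : ℂ) (x y), twist (z • x) y = z • twist x y
  twist_smul_right : ∀ (z : ℂ) (x y), twist x (z • y) = z • twist x y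
  twist_spec : ∀ (Am Ap Bm Bp : carrier) (a b a' b' : ℕ),
    a ≤ 1 → b ≤ 1 → a' ≤ 1 → b' ≤ 1 →
    Am ∈ Algebra.adjoin ℂ (c '' {i | i ∉ Λp}) →
    Ap ∈ Algebra.adjoin ℂ (c '' {i | i ∈ Λp}) →
    Bm ∈ Algebra.adjoin ℂ (c '' {i | i ∉ Λp}) →
    Bp ∈ Algebra.adjoin ℂ (c '' {i | i ∈ Λp}) →
    gauge Am = ((-1 : ℂ) ^ a) • Am →
    gauge Ap = ((-1 : ℂ) ^ b) • Ap →
    gauge Bm = ((-1 : ℂ) ^ a') • Bm →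
    gauge Bp = ((-1 : ℂ) ^ b') • Bp →
    twist (Am * Ap) (Bm * Bp)
      = ζ ^ ((a * b' : ℤ) - (b * a' : ℤ)) • (Am * Ap * (Bm * Bp))
  P : Finset (List Λ)
  P_nodup : ∀ J ∈ P, J.Nodup
  P_sub : ∀ J ∈ P, ∀ i ∈ J, i ∈ Λp
  P_unique : ∀ s : Finset Λ, s ⊆ Λp → ∃! J, J ∈ P ∧ J.toFinset = s
  Tr : carrier →ₗ[ℂ] ℂ
  Tr_basis : ∀ J ∈ P, ∀ J' ∈ P,
    Tr (twist (Θ ((J.map c).prod)) ((J'.map c).prod))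
      = if J = [] ∧ J' = [] then 1 else 0
  basis_indep : LinearIndependent ℂ
    (fun p : {J // J ∈ P} × {J // J ∈ P} =>
      twist (Θ ((p.1.1.map c).prod)) ((p.2.1.map c).prod))
  basis_span : ∀ x : carrier, x ∈ Submodule.span ℂ
    (Set.range fun p : {J // J ∈ P} × {J // J ∈ P} =>
      twist (Θ ((p.1.1.map c).prod)) ((p.2.1.map c).prod))
  plus_span : ∀ x ∈ Algebra.adjoin ℂ (c '' {i | i ∈ Λp}),
    x ∈ Submodule.span ℂ (Set.range fun J : {J // J ∈ P} => ((J.1.map c).prod))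

attribute [instance] MajoranaSetting.fintypeΛ MajoranaSetting.deceqΛ
  MajoranaSetting.nring MajoranaSetting.nalg MajoranaSetting.cmpl
  MajoranaSetting.starring MajoranaSetting.starmod

namespace MajoranaSetting

variable (S : MajoranaSetting)

/-- The subalgebra `𝔄₊` generated by the Majoranas on the `+` side. -/
def Aplus : Subalgebra ℂ S.carrier := Algebra.adjoin ℂ (S.c '' {i | i ∈ S.Λp})

/-- The subalgebra `𝔄₋` generated by the Majoranas on the `-` side. -/
def Aminus : Subalgebra ℂ S.carrier := Algebra.adjoin ℂ (S.c '' {i | i ∉ S.Λp})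

/-- The monomial `C_𝔍 = c_{i₁} ⋯ c_{i_k}`. -/
def C (J : List S.Λ) : S.carrier := (J.map S.c).prod

/-- `q_𝔍 = (-1)^{k(k-1)/2}`. -/
def q (J : List S.Λ) : ℂ := (-1 : ℂ) ^ (J.length * (J.length - 1) / 2)

/-- `s_𝔍 = ζ^{k(k-1)/2}`. -/
def sgn (J : List S.Λ) : ℂ := S.ζ ^ (J.length * (J.length - 1) / 2)

/-- The exponential `e^x` in the (finite-dimensional) algebra `𝔄`. -/
def expm (x : S.carrier) : S.carrier := NormedSpace.exp x

/-- The Hamiltonian `H = -∑_{𝔍,𝔍' ∈ 𝒫₊} J_{𝔍𝔍'} Θ(C_𝔍) ∘ C_𝔍'`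
determined by coupling constants `Jc`. -/
def Ham (Jc : List S.Λ → List S.Λ → ℂ) : S.carrier :=
  - ∑ J ∈ S.P, ∑ J' ∈ S.P, Jc J J' • S.twist (S.Θ (S.C J)) (S.C J')

/-- The index type of the basis `{C J : J ∈ 𝒫₊}`. -/
abbrev PIdx := {J : List S.Λ // J ∈ S.P}

/-- The index type `𝒫₊ - {∅}` of couplings across the reflection plane. -/
abbrev PIdx0 := {p : S.PIdx // p.1 ≠ []}

/-- The full matrix of coupling constants. -/
def Jmat (Jc : List S.Λ → List S.Λ → ℂ) : Matrix S.PIdx S.PIdx ℂ :=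
  Matrix.of fun p q => Jc p.1 q.1

/-- The matrix `J⁰` of coupling constants across the reflection plane. -/
def Jmat0 (Jc : List S.Λ → List S.Λ → ℂ) : Matrix S.PIdx0 S.PIdx0 ℂ :=
  Matrix.of fun p q => Jc p.1.1 q.1.1

end MajoranaSetting
namespace MajoranaSetting

variable (S : MajoranaSetting)

lemma theta_one : S.Θ 1 = 1 := by
  have h : (1 : S.carrier) = 1 * S.Θ 1 := by
    calc (1 : S.carrier) = S.Θ (S.Θ 1) := (S.Θ_invol 1).symm
      _ = S.Θ (S.Θ 1 * 1) := by rw [mul_one]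
      _ = S.Θ (S.Θ 1) * S.Θ 1 := S.Θ_mul _ _
      _ = 1 * S.Θ 1 := by rw [S.Θ_invol]
  rw [one_mul] at h
  exact h.symm

lemma twist_zero_left (y : S.carrier) : S.twist 0 y = 0 := by
  have := S.twist_smul_left 0 0 y
  simpa using this

lemma twist_zero_right (x : S.carrier) : S.twist x 0 = 0 := by
  have := S.twist_smul_right 0 x 0
  simpa using this

lemma C_nil : S.C [] = 1 := rfl

lemma C_cons (i : S.Λ) (J : List S.Λ) : S.C (i :: J) = S.c i * S.C J := by
  simp [C]

lemma theta_C (J : List S.Λ) : S.Θ (S.C J) = S.C (J.map S.ϑ) := by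
  induction J with
  | nil => simpa [C_nil] using S.theta_one
  | cons i J ih => rw [C_cons, S.Θ_mul, S.Θ_c, ih, List.map_cons, C_cons]

lemma C_mem_plus (J : List S.Λ) (h : ∀ i ∈ J, i ∈ S.Λp) : S.C J ∈ S.Aplus := by
  induction J with
  | nil => exact one_mem _
  | cons i J ih =>
    rw [C_cons]
    exact mul_mem (Algebra.subset_adjoin ⟨i, h i (by simp), rfl⟩)
      (ih fun j hj => h j (by simp [hj]))

lemma C_mem_minus (J : List S.Λ) (h : ∀ i ∈ J, i ∉ S.Λp) : S.C J ∈ S.Aminus := by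
  induction J with
  | nil => exact one_mem _
  | cons i J ih =>
    rw [C_cons]
    exact mul_mem (Algebra.subset_adjoin ⟨i, h i (by simp), rfl⟩)
      (ih fun j hj => h j (by simp [hj]))

lemma gauge_C (J : List S.Λ) :
    S.gauge (S.C J) = ((-1 : ℂ)) ^ J.length • S.C J := by
  induction J with
  | nil => simp [C_nil]
  | cons i J ih =>
    rw [C_cons, map_mul, S.gauge_c, ih, List.length_cons, pow_succ, mul_smul,
      mul_smul_comm, neg_mul, neg_one_smul]

end MajoranaSetting
namespace MajoranaSetting

variable (S : MajoranaSetting)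

lemma theta_neg (x : S.carrier) : S.Θ (-x) = - S.Θ x := by
  have h : -x = ((-1 : ℂ)) • x := by simp
  rw [h, S.Θ_smul]
  simp

lemma gauge_mem_minus {x : S.carrier} (hx : x ∈ S.Aminus) : S.gauge x ∈ S.Aminus := by
  replace hx : x ∈ Algebra.adjoin ℂ (S.c '' {i | i ∉ S.Λp}) := hx
  induction hx using Algebra.adjoin_induction with
  | mem y hy =>
    obtain ⟨i, hi, rfl⟩ := hy
    rw [S.gauge_c]
    exact neg_mem (Algebra.subset_adjoin ⟨i, hi, rfl⟩)
  | algebraMap r => rw [AlgEquiv.commutes]; exact algebraMap_mem _ _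
  | add x y _ _ ihx ihy => rw [map_add]; exact add_mem ihx ihy
  | mul x y _ _ ihx ihy => rw [map_mul]; exact mul_mem ihx ihy

lemma gauge_gauge_minus {x : S.carrier} (hx : x ∈ S.Aminus) :
    S.gauge (S.gauge x) = x := by
  replace hx : x ∈ Algebra.adjoin ℂ (S.c '' {i | i ∉ S.Λp}) := hx
  induction hx using Algebra.adjoin_induction with
  | mem y hy =>
    obtain ⟨i, hi, rfl⟩ := hy
    rw [S.gauge_c, map_neg, S.gauge_c, neg_neg]
  | algebraMap r => rw [AlgEquiv.commutes, AlgEquiv.commutes]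
  | add x y _ _ ihx ihy => rw [map_add, map_add, ihx, ihy]
  | mul x y _ _ ihx ihy => rw [map_mul, map_mul, ihx, ihy]

lemma swap1 {i : S.Λ} (hi : i ∈ S.Λp) {y : S.carrier} (hy : y ∈ S.Aminus) :
    S.c i * y = S.gauge y * S.c i := by
  replace hy : y ∈ Algebra.adjoin ℂ (S.c '' {j | j ∉ S.Λp}) := hy
  induction hy using Algebra.adjoin_induction with
  | mem y hy =>
    obtain ⟨j, hj, rfl⟩ := hy
    rw [S.gauge_c]
    have hne : i ≠ j := fun h => hj (h ▸ hi)
    have h := S.clifford i j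
    rw [if_neg hne] at h
    have h2 : S.c i * S.c j = - (S.c j * S.c i) := by
      have := eq_neg_of_add_eq_zero_left h
      exact this
    rw [h2, neg_mul]
  | algebraMap r => rw [AlgEquiv.commutes]; exact (Algebra.commutes r _).symm
  | add x y _ _ ihx ihy => rw [mul_add, ihx, ihy, map_add, add_mul]
  | mul x y _ _ ihx ihy =>
    rw [← mul_assoc, ihx, mul_assoc, ihy, ← mul_assoc, ← map_mul]

lemma swap {x : S.carrier} (hx : x ∈ S.Aplus) :
    ∀ y ∈ S.Aminus, x * y
      = (2⁻¹ : ℂ) • ((y + S.gauge y) * x + (y - S.gauge y) * S.gauge x) := by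
  replace hx : x ∈ Algebra.adjoin ℂ (S.c '' {j | j ∈ S.Λp}) := hx
  induction hx using Algebra.adjoin_induction with
  | mem x hxs =>
    intro y hy
    obtain ⟨i, hi, rfl⟩ := hxs
    rw [S.swap1 hi hy, S.gauge_c, mul_neg, ← sub_eq_add_neg, ← sub_mul]
    have h2 : (y + S.gauge y) - (y - S.gauge y) = (2 : ℂ) • S.gauge y := by
      rw [two_smul]; abel
    rw [h2, smul_mul_assoc, smul_smul]
    norm_num
  | algebraMap r =>
    intro y hy
    rw [AlgEquiv.commutes, ← add_mul]
    have h2 : (y + S.gauge y) + (y - S.gauge y) = (2 : ℂ) • y := by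
      rw [two_smul]; abel
    rw [h2, smul_mul_assoc, smul_smul]
    norm_num
    exact Algebra.commutes r y
  | add x₁ x₂ _ _ ih1 ih2 =>
    intro y hy
    rw [add_mul, ih1 y hy, ih2 y hy, map_add]
    simp only [mul_add, smul_add]
    abel
  | mul x₁ x₂ _ _ ih1 ih2 =>
    intro y hy
    have hg : S.gauge y ∈ S.Aminus := S.gauge_mem_minus hy
    have hy1 : y + S.gauge y ∈ S.Aminus := add_mem hy hg
    have hy2 : y - S.gauge y ∈ S.Aminus := sub_mem hy hg
    have ge1 : S.gauge (y + S.gauge y) = y + S.gauge y := by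
      rw [map_add, S.gauge_gauge_minus hy]; abel
    have go1 : S.gauge (y - S.gauge y) = -(y - S.gauge y) := by
      rw [map_sub, S.gauge_gauge_minus hy]; abel
    have e_even : x₁ * (y + S.gauge y) = (y + S.gauge y) * x₁ := by
      rw [ih1 _ hy1, ge1]
      rw [sub_self, zero_mul, add_zero, ← two_smul ℂ, smul_mul_assoc, smul_smul]
      norm_num
    have e_odd : x₁ * (y - S.gauge y) = (y - S.gauge y) * S.gauge x₁ := by
      rw [ih1 _ hy2, go1, sub_neg_eq_add, ← two_smul ℂ]
      rw [add_neg_cancel, zero_mul, zero_add, smul_mul_assoc, smul_smul]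
      norm_num
    calc x₁ * x₂ * y = x₁ * (x₂ * y) := mul_assoc _ _ _
      _ = x₁ * ((2⁻¹ : ℂ) • ((y + S.gauge y) * x₂ + (y - S.gauge y) * S.gauge x₂)) := by
          rw [ih2 y hy]
      _ = (2⁻¹ : ℂ) • (x₁ * ((y + S.gauge y) * x₂) + x₁ * ((y - S.gauge y) * S.gauge x₂)) := by
          rw [mul_smul_comm, mul_add]
      _ = (2⁻¹ : ℂ) • ((y + S.gauge y) * (x₁ * x₂) + (y - S.gauge y) * S.gauge (x₁ * x₂)) := by
          rw [← mul_assoc, e_even, ← mul_assoc, e_odd, map_mul, mul_assoc, mul_assoc]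

end MajoranaSetting
namespace MajoranaSetting

variable (S : MajoranaSetting)

lemma swap_even {x y : S.carrier} (hx : x ∈ S.Aplus) (hy : y ∈ S.Aminus)
    (he : S.gauge y = y) : x * y = y * x := by
  rw [S.swap hx y hy, he, sub_self, zero_mul, add_zero, ← two_smul ℂ,
    smul_mul_assoc, smul_smul]
  norm_num

lemma swap_odd {x y : S.carrier} (hx : x ∈ S.Aplus) (hy : y ∈ S.Aminus)
    (ho : S.gauge y = -y) : x * y = y * S.gauge x := by
  rw [S.swap hx y hy, ho, sub_neg_eq_add, ← two_smul ℂ, add_neg_cancel,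
    zero_mul, zero_add, smul_mul_assoc, smul_smul]
  norm_num

lemma comm_homog {x y : S.carrier} (hx : x ∈ S.Aplus) (hy : y ∈ S.Aminus)
    {a b : ℕ} (hgx : S.gauge x = ((-1 : ℂ)) ^ b • x)
    (hgy : S.gauge y = ((-1 : ℂ)) ^ a • y) :
    x * y = ((-1 : ℂ)) ^ (a * b) • (y * x) := by
  rcases Nat.even_or_odd a with ha | ha
  · rw [ha.neg_one_pow, one_smul] at hgy
    rw [(ha.mul_right b).neg_one_pow, one_smul]
    exact S.swap_even hx hy hgy
  · rw [ha.neg_one_pow, neg_one_smul] at hgy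
    rw [S.swap_odd hx hy hgy, hgx, mul_smul_comm, pow_mul, ha.neg_one_pow]

lemma theta_mem_minus {A : S.carrier} (hA : A ∈ S.Aplus) : S.Θ A ∈ S.Aminus := by
  replace hA : A ∈ Algebra.adjoin ℂ (S.c '' {i | i ∈ S.Λp}) := hA
  induction hA using Algebra.adjoin_induction with
  | mem x hxs =>
    obtain ⟨i, hi, rfl⟩ := hxs
    rw [S.Θ_c]
    exact Algebra.subset_adjoin ⟨S.ϑ i, (S.ϑ_exch i).mp hi, rfl⟩
  | algebraMap r =>
    rw [Algebra.algebraMap_eq_smul_one, S.Θ_smul, S.theta_one]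
    exact Subalgebra.smul_mem _ (one_mem _) _
  | add x y _ _ ihx ihy => rw [S.Θ_add]; exact add_mem ihx ihy
  | mul x y _ _ ihx ihy => rw [S.Θ_mul]; exact mul_mem ihx ihy

lemma gauge_theta {A : S.carrier} (hA : A ∈ S.Aplus) :
    S.gauge (S.Θ A) = S.Θ (S.gauge A) := by
  replace hA : A ∈ Algebra.adjoin ℂ (S.c '' {i | i ∈ S.Λp}) := hA
  induction hA using Algebra.adjoin_induction with
  | mem x hxs =>
    obtain ⟨i, hi, rfl⟩ := hxs
    rw [S.Θ_c, S.gauge_c, S.gauge_c, S.theta_neg, S.Θ_c]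
  | algebraMap r =>
    rw [Algebra.algebraMap_eq_smul_one, S.Θ_smul, S.theta_one, map_smul, map_one,
      map_smul, map_one, S.Θ_smul, S.theta_one]
  | add x y _ _ ihx ihy => rw [S.Θ_add, map_add, map_add, S.Θ_add, ihx, ihy]
  | mul x y _ _ ihx ihy => rw [S.Θ_mul, map_mul, map_mul, S.Θ_mul, ihx, ihy]

lemma twist_eq {ym xp : S.carrier} (hy : ym ∈ S.Aminus) (hx : xp ∈ S.Aplus)
    {a b : ℕ} (ha : a ≤ 1) (hb : b ≤ 1)
    (hgy : S.gauge ym = ((-1 : ℂ)) ^ a • ym)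
    (hgx : S.gauge xp = ((-1 : ℂ)) ^ b • xp) :
    S.twist ym xp = S.ζ ^ (a * b) • (ym * xp) := by
  have h := S.twist_spec ym 1 1 xp a 0 0 b ha zero_le_one zero_le_one hb
    hy (one_mem _) (one_mem _) hx hgy (by simp) (by simp) hgx
  rw [mul_one, one_mul] at h
  rw [h]
  norm_num
  rw [← Nat.cast_mul, zpow_natCast]

lemma zeta_scalar (a a' : ℕ) (ha : a ≤ 1) (ha' : a' ≤ 1) :
    S.ζ ^ (a * a) * S.ζ ^ (a' * a') * ((-1 : ℂ)) ^ (a' * a)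
      = S.ζ ^ (((a + a') % 2) * ((a + a') % 2)) := by
  interval_cases a <;> interval_cases a' <;> simp
  linear_combination -S.ζ_sq

end MajoranaSetting
namespace MajoranaSetting

variable (S : MajoranaSetting)

lemma gauge_theta_homog {A : S.carrier} (hA : A ∈ S.Aplus) {a : ℕ}
    (hgA : S.gauge A = ((-1 : ℂ)) ^ a • A) :
    S.gauge (S.Θ A) = ((-1 : ℂ)) ^ a • S.Θ A := by
  rw [S.gauge_theta hA, hgA, S.Θ_smul]
  congr 1
  simp

lemma T_mul {A B A' B' : S.carrier} (hA : A ∈ S.Aplus) (hB : B ∈ S.Aplus)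
    (hA' : A' ∈ S.Aplus) (hB' : B' ∈ S.Aplus) {a a' : ℕ} (ha : a ≤ 1) (ha' : a' ≤ 1)
    (hgA : S.gauge A = ((-1 : ℂ)) ^ a • A) (hgB : S.gauge B = ((-1 : ℂ)) ^ a • B)
    (hgA' : S.gauge A' = ((-1 : ℂ)) ^ a' • A')
    (hgB' : S.gauge B' = ((-1 : ℂ)) ^ a' • B') :
    S.twist (S.Θ A) B * S.twist (S.Θ A') B' = S.twist (S.Θ (A * A')) (B * B') := by
  have hp : (a + a') % 2 ≤ 1 := Nat.le_of_lt_succ (Nat.mod_lt _ (by norm_num))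
  have hgAA : S.gauge (A * A') = ((-1 : ℂ)) ^ ((a + a') % 2) • (A * A') := by
    rw [map_mul, hgA, hgA', smul_mul_assoc, mul_smul_comm, smul_smul, ← pow_add,
      neg_one_pow_eq_pow_mod_two]
  have hgBB : S.gauge (B * B') = ((-1 : ℂ)) ^ ((a + a') % 2) • (B * B') := by
    rw [map_mul, hgB, hgB', smul_mul_assoc, mul_smul_comm, smul_smul, ← pow_add,
      neg_one_pow_eq_pow_mod_two]
  have t1 := S.twist_eq (S.theta_mem_minus hA) hB ha ha (S.gauge_theta_homog hA hgA) hgB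
  have t2 := S.twist_eq (S.theta_mem_minus hA') hB' ha' ha'
    (S.gauge_theta_homog hA' hgA') hgB'
  have t3 := S.twist_eq (S.theta_mem_minus (mul_mem hA hA')) (mul_mem hB hB') hp hp
    (S.gauge_theta_homog (mul_mem hA hA') hgAA) hgBB
  have comm := S.comm_homog hB (S.theta_mem_minus hA') hgB
    (S.gauge_theta_homog hA' hgA')
  rw [t1, t2, t3, smul_mul_assoc, mul_smul_comm, smul_smul]
  have assoc1 : S.Θ A * B * (S.Θ A' * B') = S.Θ A * (B * S.Θ A') * B' := by
    noncomm_ring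
  rw [assoc1, comm, mul_smul_comm, smul_mul_assoc, smul_smul, S.Θ_mul]
  have assoc2 : S.Θ A * (S.Θ A' * B) * B' = S.Θ A * S.Θ A' * (B * B') := by
    noncomm_ring
  rw [assoc2]
  congr 1
  rw [← S.zeta_scalar a a' ha ha']

lemma nil_mem_P : [] ∈ S.P := by
  obtain ⟨J, ⟨hJP, hJs⟩, _⟩ := S.P_unique ∅ (Finset.empty_subset _)
  have : J = [] := by rwa [List.toFinset_eq_empty_iff] at hJs
  rwa [this] at hJP

lemma theta_zero : S.Θ 0 = 0 := by
  have h : (0 : S.carrier) = (0 : ℂ) • (0 : S.carrier) := by simp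
  rw [h, S.Θ_smul]
  simp

lemma Tr_C {J : List S.Λ} (hJ : J ∈ S.P) :
    S.Tr (S.C J) = if J = [] then 1 else 0 := by
  have hmem : S.C J ∈ S.Aplus := S.C_mem_plus J (S.P_sub J hJ)
  have hgC : S.gauge (S.C J) = ((-1 : ℂ)) ^ (J.length % 2) • S.C J := by
    rw [S.gauge_C, neg_one_pow_eq_pow_mod_two]
  have h1 : S.twist (S.Θ (S.C [])) (S.C J) = S.C J := by
    rw [C_nil, S.theta_one,
      S.twist_eq (one_mem _) hmem (a := 0) (b := J.length % 2) (by norm_num)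
        (Nat.le_of_lt_succ (Nat.mod_lt _ (by norm_num))) (by simp) hgC]
    simp
  have h2 : S.Tr (S.twist (S.Θ (S.C [])) (S.C J))
      = if ([] : List S.Λ) = [] ∧ J = [] then 1 else 0 :=
    S.Tr_basis [] S.nil_mem_P J hJ
  rw [h1] at h2
  rw [h2]
  simp

lemma Tr_one : S.Tr 1 = 1 := by
  have := S.Tr_C S.nil_mem_P
  rw [C_nil] at this
  simpa using this

lemma Tr_T {A B : S.carrier} (hA : A ∈ S.Aplus) (hB : B ∈ S.Aplus) :
    S.Tr (S.twist (S.Θ A) B) = (starRingEnd ℂ) (S.Tr A) * S.Tr B := by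
  have hBspan := S.plus_span B hB
  have hAspan := S.plus_span A hA
  clear hA hB
  have step1 : ∀ J ∈ S.P,
      ∀ B' ∈ Submodule.span ℂ (Set.range fun J : S.PIdx => S.C J.1),
      S.Tr (S.twist (S.Θ (S.C J)) B')
        = (starRingEnd ℂ) (S.Tr (S.C J)) * S.Tr B' := by
    intro J hJ B' hB'
    induction hB' using Submodule.span_induction with
    | mem x hx =>
      obtain ⟨J', rfl⟩ := hx
      show S.Tr (S.twist (S.Θ (S.C J)) (S.C J'.1))
        = (starRingEnd ℂ) (S.Tr (S.C J)) * S.Tr (S.C J'.1)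
      have hb : S.Tr (S.twist (S.Θ (S.C J)) (S.C J'.1))
          = if J = [] ∧ J'.1 = [] then 1 else 0 := S.Tr_basis J hJ J'.1 J'.2
      rw [hb, S.Tr_C hJ, S.Tr_C J'.2]
      by_cases h1 : J = [] <;> by_cases h2 : J'.1 = [] <;> simp [h1, h2]
    | zero => simp [S.twist_zero_right]
    | add x y hx hy ihx ihy =>
      rw [S.twist_add_right, map_add, map_add, ihx, ihy, mul_add]
    | smul z x hx ihx =>
      rw [S.twist_smul_right, map_smul, map_smul, ihx, smul_eq_mul, smul_eq_mul]
      ring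
  induction hAspan using Submodule.span_induction with
  | mem x hx =>
    obtain ⟨J, rfl⟩ := hx
    exact step1 J.1 J.2 B hBspan
  | zero => simp [S.theta_zero, S.twist_zero_left]
  | add x y hx hy ihx ihy =>
    rw [S.Θ_add, S.twist_add_left, map_add, map_add, map_add, ihx, ihy, add_mul]
  | smul z x hx ihx =>
    rw [S.Θ_smul, S.twist_smul_left, map_smul, ihx, map_smul, smul_eq_mul,
      smul_eq_mul, map_mul]
    ring

end MajoranaSetting
namespace MajoranaSetting

variable (S : MajoranaSetting)

/-- Ordered product `C_{Js 1} ⋯ C_{Js n}`. -/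
def Cprod {n : ℕ} (Js : Fin n → S.PIdx) : S.carrier :=
  (List.ofFn fun k => S.C (Js k).1).prod

/-- Total length of the tuples in `Js`. -/
def lenSum {n : ℕ} (Js : Fin n → S.PIdx) : ℕ := ∑ k, (Js k).1.length

lemma Cprod_zero (Js : Fin 0 → S.PIdx) : S.Cprod Js = 1 := by
  simp [Cprod]

lemma Cprod_succ {n : ℕ} (Js : Fin (n + 1) → S.PIdx) :
    S.Cprod Js = S.C (Js 0).1 * S.Cprod (fun k => Js k.succ) := by
  rw [Cprod, List.ofFn_succ, List.prod_cons, Cprod]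

lemma Cprod_cons {n : ℕ} (p : S.PIdx) (Js : Fin n → S.PIdx) :
    S.Cprod (Fin.cons p Js) = S.C p.1 * S.Cprod Js := by
  rw [S.Cprod_succ]
  simp [Fin.cons_succ]

lemma Cprod_mem {n : ℕ} (Js : Fin n → S.PIdx) : S.Cprod Js ∈ S.Aplus := by
  induction n with
  | zero => rw [S.Cprod_zero]; exact one_mem _
  | succ n ih =>
    rw [S.Cprod_succ]
    exact mul_mem (S.C_mem_plus _ (S.P_sub _ (Js 0).2)) (ih _)

lemma gauge_Cprod {n : ℕ} (Js : Fin n → S.PIdx) :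
    S.gauge (S.Cprod Js) = ((-1 : ℂ)) ^ (S.lenSum Js) • S.Cprod Js := by
  induction n with
  | zero => rw [S.Cprod_zero, map_one, lenSum]; simp
  | succ n ih =>
    have hl : S.lenSum Js = (Js 0).1.length + S.lenSum (fun k => Js k.succ) := by
      simp [lenSum, Fin.sum_univ_succ]
    rw [S.Cprod_succ, map_mul, ih, S.gauge_C, smul_mul_assoc, mul_smul_comm,
      smul_smul, ← pow_add, hl]

lemma sum_PP {M : Type*} [AddCommMonoid M] (F : List S.Λ → List S.Λ → M) :
    ∑ pq : S.PIdx × S.PIdx, F pq.1.1 pq.2.1 = ∑ J ∈ S.P, ∑ J' ∈ S.P, F J J' := by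
  rw [Fintype.sum_prod_type]
  rw [show (∑ p : S.PIdx, ∑ q : S.PIdx, F p.1 q.1)
      = ∑ p : S.PIdx, (fun J => ∑ q : S.PIdx, F J q.1) p.1 from rfl]
  rw [Finset.sum_coe_sort S.P (fun J => ∑ q : S.PIdx, F J q.1)]
  refine Finset.sum_congr rfl fun J _ => ?_
  exact Finset.sum_coe_sort S.P (fun J' => F J J')

lemma Ham_eq (Jc : List S.Λ → List S.Λ → ℂ) :
    S.Ham Jc = - ∑ pq : S.PIdx × S.PIdx,
      Jc pq.1.1 pq.2.1 • S.twist (S.Θ (S.C pq.1.1)) (S.C pq.2.1) := by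
  rw [Ham]
  exact congrArg Neg.neg (S.sum_PP
    (fun J J' => Jc J J' • S.twist (S.Θ (S.C J)) (S.C J'))).symm

lemma parity_le (J : List S.Λ) : J.length % 2 ≤ 1 :=
  Nat.le_of_lt_succ (Nat.mod_lt _ (by norm_num))

lemma gauge_C_mod (J : List S.Λ) :
    S.gauge (S.C J) = ((-1 : ℂ)) ^ (J.length % 2) • S.C J := by
  rw [S.gauge_C, neg_one_pow_eq_pow_mod_two]

lemma gauge_T {J J' : List S.Λ} (hJ : ∀ i ∈ J, i ∈ S.Λp) (hJ' : ∀ i ∈ J', i ∈ S.Λp) :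
    S.gauge (S.twist (S.Θ (S.C J)) (S.C J'))
      = ((-1 : ℂ)) ^ (J.length + J'.length) • S.twist (S.Θ (S.C J)) (S.C J') := by
  have hA := S.C_mem_plus J hJ
  have hB := S.C_mem_plus J' hJ'
  have e := S.twist_eq (S.theta_mem_minus hA) hB (S.parity_le J) (S.parity_le J')
    (S.gauge_theta_homog hA (S.gauge_C_mod J)) (S.gauge_C_mod J')
  rw [e, map_smul, map_mul, S.gauge_theta_homog hA (S.gauge_C_mod J),
    S.gauge_C_mod J', smul_mul_assoc, mul_smul_comm, smul_smul, smul_smul,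
    smul_smul]
  congr 1
  have h3 : ((-1 : ℂ)) ^ (J.length + J'.length)
      = ((-1 : ℂ)) ^ (J.length % 2) * ((-1 : ℂ)) ^ (J'.length % 2) := by
    rw [← pow_add, neg_one_pow_eq_pow_mod_two, Nat.add_mod,
      ← neg_one_pow_eq_pow_mod_two]
  rw [h3]
  ring

lemma Jc_parity (Jc : List S.Λ → List S.Λ → ℂ)
    (hGI : S.gauge (S.Ham Jc) = S.Ham Jc) :
    ∀ p q : S.PIdx, (p.1.length + q.1.length) % 2 = 1 → Jc p.1 q.1 = 0 := by
  have key : ∑ pq : S.PIdx × S.PIdx,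
      (Jc pq.1.1 pq.2.1 * (((-1 : ℂ)) ^ (pq.1.1.length + pq.2.1.length) - 1)) •
        S.twist (S.Θ (S.C pq.1.1)) (S.C pq.2.1) = 0 := by
    have h2 : ∀ pq : S.PIdx × S.PIdx,
        (Jc pq.1.1 pq.2.1 * (((-1 : ℂ)) ^ (pq.1.1.length + pq.2.1.length) - 1)) •
          S.twist (S.Θ (S.C pq.1.1)) (S.C pq.2.1)
        = S.gauge (Jc pq.1.1 pq.2.1 • S.twist (S.Θ (S.C pq.1.1)) (S.C pq.2.1))
          - Jc pq.1.1 pq.2.1 • S.twist (S.Θ (S.C pq.1.1)) (S.C pq.2.1) := by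
      intro pq
      rw [map_smul, S.gauge_T (S.P_sub _ pq.1.2) (S.P_sub _ pq.2.2), smul_smul,
        mul_sub, mul_one, sub_smul]
    rw [Finset.sum_congr rfl fun pq _ => h2 pq, Finset.sum_sub_distrib,
      ← map_sum]
    have hsum : ∑ pq : S.PIdx × S.PIdx,
        Jc pq.1.1 pq.2.1 • S.twist (S.Θ (S.C pq.1.1)) (S.C pq.2.1)
        = - S.Ham Jc := by rw [S.Ham_eq, neg_neg]
    rw [hsum, map_neg, hGI, sub_self]
  intro p q hpar
  have hli := Fintype.linearIndependent_iff.mp S.basis_indep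
    (fun pq : S.PIdx × S.PIdx =>
      Jc pq.1.1 pq.2.1 * (((-1 : ℂ)) ^ (pq.1.1.length + pq.2.1.length) - 1)) key (p, q)
  rw [neg_one_pow_eq_pow_mod_two, hpar] at hli
  simp only [pow_one] at hli
  have h2 : ((-1 : ℂ)) - 1 ≠ 0 := by norm_num
  rcases mul_eq_zero.mp hli with h | h
  · exact h
  · exact absurd h h2

end MajoranaSetting
namespace MajoranaSetting

variable (S : MajoranaSetting)

lemma twist_theta_one : S.twist (S.Θ 1) 1 = 1 := by
  rw [S.theta_one,
    S.twist_eq (one_mem _) (one_mem _) (a := 0) (b := 0) zero_le_one zero_le_one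
      (by simp) (by simp)]
  simp

lemma T_mul_term (Jc : List S.Λ → List S.Λ → ℂ)
    (hGI : S.gauge (S.Ham Jc) = S.Ham Jc) {n : ℕ}
    (p q : S.PIdx) (Jt Jt' : Fin n → S.PIdx) :
    (Jc p.1 q.1 * ∏ k, Jc (Jt k).1 (Jt' k).1) •
        (S.twist (S.Θ (S.C p.1)) (S.C q.1) *
          S.twist (S.Θ (S.Cprod Jt)) (S.Cprod Jt'))
      = (Jc p.1 q.1 * ∏ k, Jc (Jt k).1 (Jt' k).1) •
          S.twist (S.Θ (S.C p.1 * S.Cprod Jt)) (S.C q.1 * S.Cprod Jt') := by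
  by_cases hz : Jc p.1 q.1 * ∏ k, Jc (Jt k).1 (Jt' k).1 = 0
  · rw [hz, zero_smul, zero_smul]
  · have h1 : Jc p.1 q.1 ≠ 0 := fun h => hz (by rw [h, zero_mul])
    have h2 : ∀ k, Jc (Jt k).1 (Jt' k).1 ≠ 0 := fun k h =>
      hz (by rw [Finset.prod_eq_zero (Finset.mem_univ k) h, mul_zero])
    have par1 : q.1.length % 2 = p.1.length % 2 := by
      have hJp := S.Jc_parity Jc hGI p q
      rcases Nat.mod_two_eq_zero_or_one (p.1.length + q.1.length) with h | h
      · omega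
      · exact absurd (hJp h) h1
    have park : ∀ k, (Jt' k).1.length % 2 = (Jt k).1.length % 2 := by
      intro k
      have hJp := S.Jc_parity Jc hGI (Jt k) (Jt' k)
      rcases Nat.mod_two_eq_zero_or_one ((Jt k).1.length + (Jt' k).1.length)
        with h | h
      · omega
      · exact absurd (hJp h) (h2 k)
    have par2 : S.lenSum Jt' % 2 = S.lenSum Jt % 2 := by
      simp only [lenSum]
      rw [Finset.sum_nat_mod]
      rw [Finset.sum_congr rfl fun k _ => park k]
      rw [← Finset.sum_nat_mod]
    congr 1
    refine S.T_mul (S.C_mem_plus _ (S.P_sub _ p.2)) (S.C_mem_plus _ (S.P_sub _ q.2))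
      (S.Cprod_mem Jt) (S.Cprod_mem Jt') (S.parity_le p.1)
      (a' := S.lenSum Jt % 2) (Nat.le_of_lt_succ (Nat.mod_lt _ (by norm_num)))
      (S.gauge_C_mod p.1) ?_ ?_ ?_
    · rw [S.gauge_C_mod q.1, par1]
    · rw [S.gauge_Cprod, neg_one_pow_eq_pow_mod_two]
    · rw [S.gauge_Cprod, neg_one_pow_eq_pow_mod_two, par2]

lemma pow_expand (Jc : List S.Λ → List S.Λ → ℂ)
    (hGI : S.gauge (S.Ham Jc) = S.Ham Jc) (n : ℕ) :
    (-(S.Ham Jc)) ^ n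
      = ∑ Js : Fin n → S.PIdx, ∑ Js' : Fin n → S.PIdx,
          (∏ k, Jc (Js k).1 (Js' k).1) •
            S.twist (S.Θ (S.Cprod Js)) (S.Cprod Js') := by
  induction n with
  | zero =>
    rw [pow_zero, Fintype.sum_unique]
    rw [Fintype.sum_unique]
    simp [S.Cprod_zero, S.twist_theta_one]
  | succ n ih =>
    have e1 : ∀ (G : (Fin (n + 1) → S.PIdx) → S.carrier),
        ∑ Js : Fin (n + 1) → S.PIdx, G Js
          = ∑ p : S.PIdx, ∑ Jt : Fin n → S.PIdx, G (Fin.cons p Jt) := by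
      intro G
      calc ∑ Js : Fin (n + 1) → S.PIdx, G Js
          = ∑ x : S.PIdx × (Fin n → S.PIdx), G (Fin.cons x.1 x.2) :=
            (Fintype.sum_equiv (Fin.consEquiv fun _ => S.PIdx)
              (fun x => G (Fin.cons x.1 x.2)) G (fun x => rfl)).symm
        _ = ∑ p : S.PIdx, ∑ Jt : Fin n → S.PIdx, G (Fin.cons p Jt) := by
            exact Fintype.sum_prod_type
              (f := fun x : S.PIdx × (Fin n → S.PIdx) => G (Fin.cons x.1 x.2))
    have hK : -(S.Ham Jc) = ∑ pq : S.PIdx × S.PIdx,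
        Jc pq.1.1 pq.2.1 • S.twist (S.Θ (S.C pq.1.1)) (S.C pq.2.1) := by
      rw [S.Ham_eq, neg_neg]
    have key : ∀ (pq : S.PIdx × S.PIdx) (Jt Jt' : Fin n → S.PIdx),
        (Jc pq.1.1 pq.2.1 • S.twist (S.Θ (S.C pq.1.1)) (S.C pq.2.1)) *
          ((∏ k, Jc (Jt k).1 (Jt' k).1) •
            S.twist (S.Θ (S.Cprod Jt)) (S.Cprod Jt'))
        = (∏ k, Jc ((Fin.cons pq.1 Jt : Fin (n + 1) → S.PIdx) k).1 ((Fin.cons pq.2 Jt' : Fin (n + 1) → S.PIdx) k).1) •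
            S.twist (S.Θ (S.Cprod (Fin.cons pq.1 Jt)))
              (S.Cprod (Fin.cons pq.2 Jt')) := by
      intro pq Jt Jt'
      rw [smul_mul_assoc, mul_smul_comm, smul_smul, Fin.prod_univ_succ]
      simp only [Fin.cons_zero, Fin.cons_succ]
      rw [S.Cprod_cons, S.Cprod_cons]
      exact S.T_mul_term Jc hGI pq.1 pq.2 Jt Jt'
    have lhs_eq : (∑ pq : S.PIdx × S.PIdx,
        Jc pq.1.1 pq.2.1 • S.twist (S.Θ (S.C pq.1.1)) (S.C pq.2.1)) *
        (∑ Jt : Fin n → S.PIdx, ∑ Jt' : Fin n → S.PIdx,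
          (∏ k, Jc (Jt k).1 (Jt' k).1) •
            S.twist (S.Θ (S.Cprod Jt)) (S.Cprod Jt'))
        = ∑ pq : S.PIdx × S.PIdx, ∑ Jt : Fin n → S.PIdx, ∑ Jt' : Fin n → S.PIdx,
            (∏ k, Jc ((Fin.cons pq.1 Jt : Fin (n + 1) → S.PIdx) k).1 ((Fin.cons pq.2 Jt' : Fin (n + 1) → S.PIdx) k).1) •
              S.twist (S.Θ (S.Cprod (Fin.cons pq.1 Jt)))
                (S.Cprod (Fin.cons pq.2 Jt')) := by
      rw [Finset.sum_mul]
      refine Finset.sum_congr rfl fun pq _ => ?_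
      rw [Finset.mul_sum]
      refine Finset.sum_congr rfl fun Jt _ => ?_
      rw [Finset.mul_sum]
      exact Finset.sum_congr rfl fun Jt' _ => key pq Jt Jt'
    have h1 : (∑ Js : Fin (n + 1) → S.PIdx, ∑ Js' : Fin (n + 1) → S.PIdx,
        (∏ k, Jc (Js k).1 (Js' k).1) • S.twist (S.Θ (S.Cprod Js)) (S.Cprod Js'))
        = ∑ p : S.PIdx, ∑ Jt : Fin n → S.PIdx, ∑ Js' : Fin (n + 1) → S.PIdx,
            (∏ k, Jc ((Fin.cons p Jt : Fin (n + 1) → S.PIdx) k).1 (Js' k).1) •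
              S.twist (S.Θ (S.Cprod (Fin.cons p Jt))) (S.Cprod Js') :=
      e1 _
    rw [pow_succ', ih, hK, lhs_eq, h1, Fintype.sum_prod_type]
    refine Finset.sum_congr rfl fun p _ => ?_
    conv_lhs => rw [Finset.sum_comm]
    refine Finset.sum_congr rfl fun Jt _ => ?_
    exact (e1 (fun Js' => (∏ k, Jc ((Fin.cons p Jt : Fin (n + 1) → S.PIdx) k).1
      (Js' k).1) • S.twist (S.Θ (S.Cprod (Fin.cons p Jt))) (S.Cprod Js'))).symm

lemma Tr_pow (Jc : List S.Λ → List S.Λ → ℂ)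
    (hGI : S.gauge (S.Ham Jc) = S.Ham Jc) (n : ℕ) :
    S.Tr ((-(S.Ham Jc)) ^ n)
      = ∑ Js : Fin n → S.PIdx, ∑ Js' : Fin n → S.PIdx,
          (∏ k, Jc (Js k).1 (Js' k).1) *
            ((starRingEnd ℂ) (S.Tr (S.Cprod Js)) * S.Tr (S.Cprod Js')) := by
  rw [S.pow_expand Jc hGI n, map_sum]
  refine Finset.sum_congr rfl fun Js _ => ?_
  rw [map_sum]
  refine Finset.sum_congr rfl fun Js' _ => ?_
  rw [map_smul, S.Tr_T (S.Cprod_mem Js) (S.Cprod_mem Js'), smul_eq_mul]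

end MajoranaSetting
namespace MajoranaSetting

variable (S : MajoranaSetting)

lemma Tr_pow_nonneg (Jc : List S.Λ → List S.Λ → ℂ)
    (hGI : S.gauge (S.Ham Jc) = S.Ham Jc)
    (hpsd : (S.Jmat Jc).PosSemidef) (n : ℕ) :
    0 ≤ S.Tr ((-(S.Ham Jc)) ^ n) := by
  obtain ⟨Bm, hB⟩ : ∃ B : Matrix S.PIdx S.PIdx ℂ, S.Jmat Jc = Matrix.conjTranspose B * B := by
    open scoped MatrixOrder Matrix.Norms.L2Operator in
    exact CStarAlgebra.nonneg_iff_eq_star_mul_self.mp hpsd.nonneg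
  have hJ : ∀ p q : S.PIdx, Jc p.1 q.1
      = ∑ r : S.PIdx, (starRingEnd ℂ) (Bm r p) * Bm r q := by
    intro p q
    have h := congrFun (congrFun hB p) q
    simpa [Jmat, Matrix.mul_apply, Matrix.conjTranspose_apply] using h
  have hcoef : ∀ Js Js' : Fin n → S.PIdx,
      (∏ k, Jc (Js k).1 (Js' k).1)
        = ∑ r : Fin n → S.PIdx,
            ∏ k, ((starRingEnd ℂ) (Bm (r k) (Js k)) * Bm (r k) (Js' k)) := by
    intro Js Js'
    rw [Finset.prod_congr rfl fun k _ => hJ (Js k) (Js' k),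
      Finset.prod_univ_sum, Fintype.piFinset_univ]
  rw [S.Tr_pow Jc hGI n]
  have keyeq : (∑ Js : Fin n → S.PIdx, ∑ Js' : Fin n → S.PIdx,
      (∏ k, Jc (Js k).1 (Js' k).1) *
        ((starRingEnd ℂ) (S.Tr (S.Cprod Js)) * S.Tr (S.Cprod Js')))
      = ∑ r : Fin n → S.PIdx,
          (starRingEnd ℂ) (∑ Js : Fin n → S.PIdx,
              (∏ k, Bm (r k) (Js k)) * S.Tr (S.Cprod Js)) *
            (∑ Js : Fin n → S.PIdx,
              (∏ k, Bm (r k) (Js k)) * S.Tr (S.Cprod Js)) := by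
    have expand : ∀ r : Fin n → S.PIdx,
        (starRingEnd ℂ) (∑ Js : Fin n → S.PIdx,
            (∏ k, Bm (r k) (Js k)) * S.Tr (S.Cprod Js)) *
          (∑ Js : Fin n → S.PIdx,
            (∏ k, Bm (r k) (Js k)) * S.Tr (S.Cprod Js))
        = ∑ Js : Fin n → S.PIdx, ∑ Js' : Fin n → S.PIdx,
            ((∏ k, (starRingEnd ℂ) (Bm (r k) (Js k))) *
                (starRingEnd ℂ) (S.Tr (S.Cprod Js))) *
              ((∏ k, Bm (r k) (Js' k)) * S.Tr (S.Cprod Js')) := by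
      intro r
      rw [map_sum, Finset.sum_mul_sum]
      refine Finset.sum_congr rfl fun Js _ => Finset.sum_congr rfl fun Js' _ => ?_
      rw [map_mul, map_prod]
    rw [Finset.sum_congr rfl fun r _ => expand r]
    conv_rhs => rw [Finset.sum_comm]
    refine Finset.sum_congr rfl fun Js _ => ?_
    conv_rhs => rw [Finset.sum_comm]
    refine Finset.sum_congr rfl fun Js' _ => ?_
    rw [hcoef Js Js', Finset.sum_mul]
    refine Finset.sum_congr rfl fun r _ => ?_
    rw [Finset.prod_mul_distrib]
    ring
  rw [keyeq]
  refine Finset.sum_nonneg fun r _ => ?_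
  exact star_mul_self_nonneg _

lemma Tr_pow_re (Jc : List S.Λ → List S.Λ → ℂ)
    (hGI : S.gauge (S.Ham Jc) = S.Ham Jc)
    (hpsd : (S.Jmat Jc).PosSemidef) (n : ℕ) :
    S.Tr ((-(S.Ham Jc)) ^ n) = ((S.Tr ((-(S.Ham Jc)) ^ n)).re : ℂ)
      ∧ 0 ≤ (S.Tr ((-(S.Ham Jc)) ^ n)).re := by
  have h := S.Tr_pow_nonneg Jc hGI hpsd n
  rw [Complex.le_def] at h
  simp only [Complex.zero_re, Complex.zero_im] at h
  constructor
  · apply Complex.ext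
    · simp
    · simpa using h.2.symm
  · exact h.1

lemma fd : FiniteDimensional ℂ S.carrier := by
  have hb : ⊤ ≤ Submodule.span ℂ
      (Set.range fun p : {J // J ∈ S.P} × {J // J ∈ S.P} =>
        S.twist (S.Θ ((p.1.1.map S.c).prod)) ((p.2.1.map S.c).prod)) :=
    fun x _ => S.basis_span x
  exact Module.Finite.of_basis (Module.Basis.mk S.basis_indep hb)

end MajoranaSetting
lemma MajoranaSetting.expm_eq (S : MajoranaSetting) (x : S.carrier) :
    S.expm x = NormedSpace.exp x := rfl

/-- if the full coupling matrix `J` of the reflection-invariant,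
globally gauge-invariant Hamiltonian `H` is positive semidefinite, then
`Z_{βH} = Tr(e^{-βH})` is real and non-decreasing in `β ≥ 0`, with `Z_0 = 1`;
in particular `1 ≤ Z_{βH}` for all `β ≥ 0`. -/
theorem partition_sum_monotone (S : MajoranaSetting)
    (Jc : List S.Λ → List S.Λ → ℂ)
    (hRI : S.Θ (S.Ham Jc) = S.Ham Jc)
    (hGI : S.gauge (S.Ham Jc) = S.Ham Jc)
    (hpsd : (S.Jmat Jc).PosSemidef) :
    (S.Tr (S.expm (-(((0 : ℝ) : ℂ) • S.Ham Jc))) = 1) ∧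
    (∀ β₁ β₂ : ℝ, 0 ≤ β₁ → β₁ ≤ β₂ →
      (S.Tr (S.expm (-((β₁ : ℂ) • S.Ham Jc)))).re
        ≤ (S.Tr (S.expm (-((β₂ : ℂ) • S.Ham Jc)))).re) ∧
    (∀ β : ℝ, 0 ≤ β →
      (S.Tr (S.expm (-((β : ℂ) • S.Ham Jc)))).im = 0 ∧
      1 ≤ (S.Tr (S.expm (-((β : ℂ) • S.Ham Jc)))).re) := by
  classical
  haveI : FiniteDimensional ℂ S.carrier := S.fd
  set K : S.carrier := -(S.Ham Jc) with hKdef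
  set t : ℕ → ℝ := fun n => (S.Tr (K ^ n)).re with ht
  have ht0 : ∀ n, 0 ≤ t n := fun n => (S.Tr_pow_re Jc hGI hpsd n).2
  have htC : ∀ n, S.Tr (K ^ n) = ((t n : ℝ) : ℂ) :=
    fun n => (S.Tr_pow_re Jc hGI hpsd n).1
  have ht0val : t 0 = 1 := by
    rw [ht]
    simp only [pow_zero]
    rw [S.Tr_one]
    simp
  let Trc : S.carrier →L[ℂ] ℂ := LinearMap.toContinuousLinearMap S.Tr
  have hTrc : ∀ x, Trc x = S.Tr x := fun x => rfl
  set f : ℝ → ℕ → ℝ := fun β n => ((Nat.factorial n : ℝ))⁻¹ * (β ^ n * t n) with hf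
  -- expansion of the partition function
  have hterm : ∀ (β : ℝ) (n : ℕ), Trc (((Nat.factorial n : ℂ))⁻¹ • ((β : ℂ) • K) ^ n)
      = ((f β n : ℝ) : ℂ) := by
    intro β n
    have h1 : (((β : ℂ)) • K) ^ n = ((β : ℂ)) ^ n • K ^ n := smul_pow _ _ _
    rw [h1, map_smul, map_smul, hTrc, htC n, hf]
    simp only [smul_eq_mul]
    push_cast
    ring
  have hsummC : ∀ β : ℝ, Summable (fun n : ℕ => ((f β n : ℝ) : ℂ)) := by
    intro β
    have hs := NormedSpace.expSeries_summable' (𝕂 := ℂ) ((β : ℂ) • K)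
    have := hs.mapL Trc
    exact this.congr (hterm β)
  have hsumm : ∀ β : ℝ, Summable (f β) :=
    fun β => Complex.summable_ofReal.mp (hsummC β)
  have hexp : ∀ β : ℝ, S.Tr (S.expm (-((β : ℂ) • S.Ham Jc)))
      = ((∑' n : ℕ, f β n : ℝ) : ℂ) := by
    intro β
    have h0 : -((β : ℂ) • S.Ham Jc) = (β : ℂ) • K := by rw [hKdef, smul_neg]
    have hs := NormedSpace.expSeries_summable' (𝕂 := ℂ) ((β : ℂ) • K)
    have h1 : S.expm ((β : ℂ) • K)
        = ∑' n : ℕ, ((Nat.factorial n : ℂ))⁻¹ • ((β : ℂ) • K) ^ n := by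
      rw [S.expm_eq, NormedSpace.exp_eq_tsum ℂ]
    calc S.Tr (S.expm (-((β : ℂ) • S.Ham Jc)))
        = Trc (∑' n : ℕ, ((Nat.factorial n : ℂ))⁻¹ • ((β : ℂ) • K) ^ n) := by
          rw [h0, h1, hTrc]
      _ = ∑' n : ℕ, Trc (((Nat.factorial n : ℂ))⁻¹ • ((β : ℂ) • K) ^ n) := Trc.map_tsum hs
      _ = ∑' n : ℕ, ((f β n : ℝ) : ℂ) := tsum_congr (hterm β)
      _ = ((∑' n : ℕ, f β n : ℝ) : ℂ) := (Complex.ofReal_tsum _).symm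
  have hre : ∀ β : ℝ, (S.Tr (S.expm (-((β : ℂ) • S.Ham Jc)))).re
      = ∑' n : ℕ, f β n := by
    intro β
    rw [hexp β, Complex.ofReal_re]
  refine ⟨?_, ?_, ?_⟩
  · have h0 : -(((0 : ℝ) : ℂ) • S.Ham Jc) = 0 := by simp
    rw [h0, S.expm_eq, NormedSpace.exp_zero, S.Tr_one]
  · intro β₁ β₂ hβ₁ h12
    rw [hre β₁, hre β₂]
    refine Summable.tsum_le_tsum (fun n => ?_) (hsumm β₁) (hsumm β₂)
    have hp : β₁ ^ n ≤ β₂ ^ n := pow_le_pow_left₀ hβ₁ h12 n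
    exact mul_le_mul_of_nonneg_left
      (mul_le_mul_of_nonneg_right hp (ht0 n)) (by positivity)
  · intro β hβ
    constructor
    · rw [hexp β]
      simp
    · rw [hre β]
      have h00 : f β 0 = 1 := by
        rw [hf]
        simp [ht0val]
      have hnn : ∀ n : ℕ, n ≠ 0 → 0 ≤ f β n := by
        intro n _
        have := ht0 n
        have : (0:ℝ) ≤ β ^ n := pow_nonneg hβ n
        positivity
      calc (1 : ℝ) = f β 0 := h00.symm
        _ ≤ ∑' n, f β n := Summable.le_tsum (hsumm β) 0 fun n hn => hnn n hn
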